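/- arXiv:1202.1219 — 2 statements merged into one kernel-verified Lean document; each statement's English description precedes it below -/
import Mathlib

section
/- For all nonnegative integers i and j, the sum over m from 0 to min(i,j) of q^{T_{i+j-m} + T_m} / ((q;q)_{i-m} (q;q)_{j-m} (q;q)_m) equals q^{T_i + T_j} / ((q;q)_i (q;q)_j), as an identity of formal power series in q (with |q| < 1, or in the ring of formal power series where (q;q)_n is invertible). -/
open Finset

/-- The variable `q`, as a rational function over `ℚ`. -/
noncomputable def q : RatFunc ℚ := RatFunc.X

/-- The q-shifted factorial `(a; q)_k`. -/
noncomputable def qPoch (a : RatFunc ℚ) (k : ℕ) : RatFunc ℚ :=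
  ∏ s ∈ Finset.range k, (1 - a * q ^ s)

/-- The n-th triangular number `T_n = n(n+1)/2`. -/
def T (n : ℕ) : ℕ := n * (n + 1) / 2

lemma one_sub_q_pow_ne_zero {n : ℕ} (h : n ≠ 0) : (1 : RatFunc ℚ) - q ^ n ≠ 0 := by
  have heq : (1 : RatFunc ℚ) - q ^ n =
      algebraMap (Polynomial ℚ) (RatFunc ℚ) (1 - Polynomial.X ^ n) := by
    simp [q, RatFunc.algebraMap_X]
  rw [heq]
  apply RatFunc.algebraMap_ne_zero
  intro hz
  have := congrArg (Polynomial.eval 0) hz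
  simp [zero_pow h] at this

lemma qPoch_ne_zero (n : ℕ) : qPoch q n ≠ 0 := by
  unfold qPoch
  apply Finset.prod_ne_zero_iff.mpr
  intro s _
  have : q * q ^ s = q ^ (s + 1) := by ring
  rw [this]
  exact one_sub_q_pow_ne_zero (Nat.succ_ne_zero s)

lemma qPoch_succ (n : ℕ) : qPoch q (n + 1) = qPoch q n * (1 - q ^ (n + 1)) := by
  unfold qPoch
  rw [Finset.prod_range_succ]
  congr 1
  ring

lemma T_succ (n : ℕ) : T (n + 1) = T n + (n + 1) := by
  unfold T
  have h : (n + 1) * (n + 1 + 1) = n * (n + 1) + (n + 1) * 2 := by ring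
  rw [h, Nat.add_mul_div_right _ _ (by norm_num : (0:ℕ) < 2)]

/-- The summand. -/
noncomputable def t (i j m : ℕ) : RatFunc ℚ :=
  q ^ (T (i + j - m) + T m) / (qPoch q (i - m) * qPoch q (j - m) * qPoch q m)

lemma termA (i j l : ℕ) (hl : l ≤ i + j) :
    (1 - q ^ (l + 1)) * t (i + 1) (j + 1) (l + 1) = q ^ (i + j + 2) * t i j l := by
  unfold t
  have h1 : i + 1 + (j + 1) - (l + 1) = (i + j - l) + 1 := by omega
  have h2 : i + 1 - (l + 1) = i - l := by omega
  have h3 : j + 1 - (l + 1) = j - l := by omega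
  have hexp : T (i + j - l + 1) + T (l + 1) = (i + j + 2) + (T (i + j - l) + T l) := by
    rw [T_succ, T_succ]; omega
  rw [h1, h2, h3, hexp, qPoch_succ, pow_add q (i + j + 2) (T (i + j - l) + T l)]
  have hA : (1 : RatFunc ℚ) - q ^ (l + 1) ≠ 0 := one_sub_q_pow_ne_zero (by omega)
  have h4 := qPoch_ne_zero (i - l)
  have h5 := qPoch_ne_zero (j - l)
  have h6 := qPoch_ne_zero l
  rw [mul_div_assoc', mul_div_assoc', div_eq_div_iff
    (mul_ne_zero (mul_ne_zero h4 h5) (mul_ne_zero h6 hA))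
    (mul_ne_zero (mul_ne_zero h4 h5) h6)]
  ring

lemma termB (i j m : ℕ) (hm : m ≤ j) :
    q ^ m * (1 - q ^ (j + 1 - m)) * t (i + 1) (j + 1) m = q ^ (i + j + 2) * t (i + 1) j m := by
  unfold t
  have h1 : i + 1 + (j + 1) - m = (i + 1 + j - m) + 1 := by omega
  have h2 : j + 1 - m = (j - m) + 1 := by omega
  have hexp : m + (T (i + 1 + j - m + 1) + T m) = (i + j + 2) + (T (i + 1 + j - m) + T m) := by
    rw [T_succ]; omega
  rw [h1, h2, qPoch_succ]
  have : q ^ m * (1 - q ^ (j - m + 1)) *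
      (q ^ (T (i + 1 + j - m + 1) + T m) /
        (qPoch q (i + 1 - m) * (qPoch q (j - m) * (1 - q ^ (j - m + 1))) * qPoch q m))
      = q ^ (m + (T (i + 1 + j - m + 1) + T m)) /
        (qPoch q (i + 1 - m) * qPoch q (j - m) * qPoch q m) := by
    have hA : (1 : RatFunc ℚ) - q ^ (j - m + 1) ≠ 0 := one_sub_q_pow_ne_zero (by omega)
    have h4 := qPoch_ne_zero (i + 1 - m)
    have h5 := qPoch_ne_zero (j - m)
    have h6 := qPoch_ne_zero m
    rw [pow_add q m (T (i + 1 + j - m + 1) + T m), mul_div_assoc', div_eq_div_iff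
      (mul_ne_zero (mul_ne_zero h4 (mul_ne_zero h5 hA)) h6)
      (mul_ne_zero (mul_ne_zero h4 h5) h6)]
    ring
  rw [this, hexp, pow_add]
  field_simp

lemma step (i j : ℕ) :
    (1 - q ^ (j + 1)) * ∑ m ∈ Finset.range (min (i + 1) (j + 1) + 1), t (i + 1) (j + 1) m
    = q ^ (i + j + 2) * ((∑ m ∈ Finset.range (min i j + 1), t i j m)
        + ∑ m ∈ Finset.range (min (i + 1) j + 1), t (i + 1) j m) := by
  have hmin : min (i + 1) (j + 1) + 1 = min i j + 2 := by omega
  rw [hmin, Finset.mul_sum]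
  have split : ∀ m ∈ Finset.range (min i j + 2),
      (1 - q ^ (j + 1)) * t (i + 1) (j + 1) m
      = (1 - q ^ m) * t (i + 1) (j + 1) m + q ^ m * (1 - q ^ (j + 1 - m)) * t (i + 1) (j + 1) m := by
    intro m hm
    simp only [Finset.mem_range] at hm
    have hq : q ^ m * q ^ (j + 1 - m) = q ^ (j + 1) := by
      rw [← pow_add]; congr 1; omega
    have hcoef : (1 : RatFunc ℚ) - q ^ (j + 1)
        = (1 - q ^ m) + q ^ m * (1 - q ^ (j + 1 - m)) := by
      rw [mul_sub, mul_one, hq]; ring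
    rw [hcoef]; ring
  rw [Finset.sum_congr rfl split, Finset.sum_add_distrib]
  have first : ∑ m ∈ Finset.range (min i j + 2), (1 - q ^ m) * t (i + 1) (j + 1) m
      = q ^ (i + j + 2) * ∑ m ∈ Finset.range (min i j + 1), t i j m := by
    rw [Finset.sum_range_succ']
    simp only [pow_zero, sub_self, zero_mul, add_zero]
    rw [Finset.mul_sum]
    apply Finset.sum_congr rfl
    intro l hl
    simp only [Finset.mem_range] at hl
    exact termA i j l (by omega)
  have second : ∑ m ∈ Finset.range (min i j + 2), q ^ m * (1 - q ^ (j + 1 - m)) * t (i + 1) (j + 1) m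
      = q ^ (i + j + 2) * ∑ m ∈ Finset.range (min (i + 1) j + 1), t (i + 1) j m := by
    rcases le_or_gt j i with hji | hij
    · have e1 : min i j = j := by omega
      have e2 : min (i + 1) j = j := by omega
      rw [e1, e2, Finset.sum_range_succ]
      have hz : q ^ (j + 1) * (1 - q ^ (j + 1 - (j + 1))) * t (i + 1) (j + 1) (j + 1) = 0 := by
        simp
      rw [hz, add_zero, Finset.mul_sum]
      apply Finset.sum_congr rfl
      intro m hm
      simp only [Finset.mem_range] at hm
      exact termB i j m (by omega)
    · have e1 : min i j = i := by omega
      have e2 : min (i + 1) j = i + 1 := by omega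
      rw [e1, e2, Finset.mul_sum]
      apply Finset.sum_congr rfl
      intro m hm
      simp only [Finset.mem_range] at hm
      exact termB i j m (by omega)
  rw [first, second, mul_add]

lemma main (i j : ℕ) :
    ∑ m ∈ Finset.range (min i j + 1), t i j m
    = q ^ (T i + T j) / (qPoch q i * qPoch q j) := by
  induction j generalizing i with
  | zero =>
    have : min i 0 = 0 := by omega
    rw [this, Finset.sum_range_one]
    unfold t
    simp [qPoch]
  | succ j ih =>
    cases i with
    | zero =>
      have : min 0 (j + 1) = 0 := by omega
      rw [this, Finset.sum_range_one]
      unfold t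
      simp [qPoch, Nat.add_comm]
    | succ i =>
      have h1 := step i j
      rw [ih i, ih (i + 1)] at h1
      have key : (1 - q ^ (j + 1)) * (q ^ (T (i + 1) + T (j + 1)) / (qPoch q (i + 1) * qPoch q (j + 1)))
          = q ^ (i + j + 2) * (q ^ (T i + T j) / (qPoch q i * qPoch q j)
              + q ^ (T (i + 1) + T j) / (qPoch q (i + 1) * qPoch q j)) := by
        rw [T_succ i, T_succ j, qPoch_succ i, qPoch_succ j]
        have hne1 : (1 : RatFunc ℚ) - q ^ (i + 1) ≠ 0 := one_sub_q_pow_ne_zero (by omega)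
        have hne2 : (1 : RatFunc ℚ) - q ^ (j + 1) ≠ 0 := one_sub_q_pow_ne_zero (by omega)
        have hpi := qPoch_ne_zero i
        have hpj := qPoch_ne_zero j
        field_simp
        ring
      exact mul_left_cancel₀ (one_sub_q_pow_ne_zero (Nat.succ_ne_zero j)) (h1.trans key.symm)

/-- Lemma 2 of Alladi–Gordon:
`∑_{m=0}^{min(i,j)} q^{T_{i+j-m}+T_m} / ((q;q)_{i-m}(q;q)_{j-m}(q;q)_m)
  = q^{T_i+T_j} / ((q;q)_i (q;q)_j)`. -/
theorem alladi_gordon_lemma2 (i j : ℕ) :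
    ∑ m ∈ Finset.range (min i j + 1),
      q ^ (T (i + j - m) + T m) / (qPoch q (i - m) * qPoch q (j - m) * qPoch q m) =
    q ^ (T i + T j) / (qPoch q i * qPoch q j) := by
  have := main i j
  simpa [t] using this
end

section
/- Fix nonnegative integers i, j, k with k ≤ j ≤ i and k ≥ 1. Then (q^{i-k+1};q)_k · [j choose k]_q = ∑_λ (-1)^{ol(λ)} q^{|λ| + ol(λ)·(i-k+1)}, where the sum runs over all overpartitions λ with exactly k nonnegative parts such that: every part is at most j−1, and for each 1 ≤ s ≤ k−1, if j−s occurs as a part then there are at least k−s overlined parts strictly to its right. Here ol(λ) is the number of overlined parts of λ and |λ| is the sum of its parts. -/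
open Finset
open scoped Classical

/-- The Gaussian (q-binomial) coefficient. -/
noncomputable def qbinom (j k : ℕ) : RatFunc ℚ :=
  qPoch q j / (qPoch q k * qPoch q (j - k))

/-- The set `O(i,j,k)` of overpartitions with exactly `k` nonnegative parts, each part at
most `j-1` (encoded as a weakly decreasing function `Fin k → Fin j` together with an
overlining indicator `Fin k → Bool`, where only first occurrences may be overlined),
such that for each `1 ≤ s ≤ k-1`, if `j-s` occurs as a part then there are at least
`k-s` overlined parts strictly to its right. (It does not depend on `i`.) -/
noncomputable def AGset (j k : ℕ) : Finset ((Fin k → Fin j) × (Fin k → Bool)) :=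
  Finset.univ.filter (fun p =>
    (∀ a b : Fin k, a ≤ b → (p.1 b : ℕ) ≤ (p.1 a : ℕ)) ∧
    (∀ a : Fin k, p.2 a = true → ∀ b : Fin k, b < a → p.1 b ≠ p.1 a) ∧
    (∀ s ∈ Finset.Icc 1 (k - 1), ∀ a : Fin k, (p.1 a : ℕ) = j - s →
      k - s ≤ (Finset.univ.filter (fun b : Fin k => a < b ∧ p.2 b = true)).card))

/-- The number of overlined parts of an overpartition. -/
def ol {j k : ℕ} (p : (Fin k → Fin j) × (Fin k → Bool)) : ℕ :=
  (Finset.univ.filter (fun a : Fin k => p.2 a = true)).card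

/-- The size (sum of parts) of an overpartition. -/
def psize {j k : ℕ} (p : (Fin k → Fin j) × (Fin k → Bool)) : ℕ :=
  ∑ a, (p.1 a : ℕ)


/-! ### Auxiliary material -/

noncomputable def BoxF (n k : ℕ) : Finset (Fin k → Fin (n+1)) :=
  Finset.univ.filter (fun μ => ∀ a b : Fin k, a ≤ b → (μ b : ℕ) ≤ (μ a : ℕ))

noncomputable def B (n k : ℕ) : RatFunc ℚ := ∑ μ ∈ BoxF n k, q ^ (∑ a, (μ a : ℕ))

lemma B_zero_right (n : ℕ) : B n 0 = 1 := by
  rw [B]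
  have h1 : BoxF n 0 = Finset.univ := by
    rw [BoxF]; apply Finset.filter_true_of_mem; intro μ _ a; exact a.elim0
  have h2 : ∀ μ : Fin 0 → Fin (n+1), q ^ (∑ a, ((μ a : ℕ))) = 1 := by
    intro μ; simp
  rw [h1, Finset.sum_congr rfl (fun μ _ => h2 μ)]
  simp

lemma B_zero_left (k : ℕ) : B 0 k = 1 := by
  rw [B]
  have h1 : BoxF 0 k = Finset.univ := by
    rw [BoxF]; apply Finset.filter_true_of_mem; intro μ _ a b _
    have hb := (μ b).isLt; have ha := (μ a).isLt; omega
  have h2 : ∀ μ : Fin k → Fin (0+1), q ^ (∑ a, ((μ a : ℕ))) = 1 := by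
    intro μ
    have : ∀ a : Fin k, (μ a : ℕ) = 0 := fun a => by have := (μ a).isLt; omega
    simp [this]
  rw [h1, Finset.sum_congr rfl (fun μ _ => h2 μ)]
  have : (Finset.univ : Finset (Fin k → Fin (0+1))).card = 1 := by
    simp [Finset.card_univ]
  simp [Finset.sum_const, this]

lemma B_rec (n k : ℕ) : B (n+1) (k+1) = B n (k+1) + q^(n+1) * B (n+1) k := by
  rw [B]
  rw [← Finset.sum_filter_add_sum_filter_not (BoxF (n+1) (k+1))
      (fun μ => (μ 0 : ℕ) ≤ n)]
  congr 1
  · -- part with small top: biject with BoxF n (k+1)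
    rw [B]
    apply Finset.sum_nbij' (i := fun μ => fun a => (⟨min (μ a : ℕ) n, by omega⟩ : Fin (n+1)))
      (j := fun ν => fun a => (⟨(ν a : ℕ), by
        have := (ν a).isLt; omega⟩ : Fin (n+2)))
    · intro μ hμ
      simp only [BoxF, Finset.mem_filter, Finset.mem_univ, true_and] at *
      intro a b hab
      have h1 := hμ.1 a b hab
      show min (μ b : ℕ) n ≤ min (μ a : ℕ) n
      omega
    · intro ν hν
      simp only [BoxF, Finset.mem_filter, Finset.mem_univ, true_and] at *
      refine ⟨fun a b hab => hν a b hab, ?_⟩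
      show (ν 0 : ℕ) ≤ n
      exact Nat.lt_succ_iff.mp (ν 0).isLt
    · intro μ hμ
      simp only [BoxF, Finset.mem_filter, Finset.mem_univ, true_and] at hμ
      funext a
      have ha : (μ a : ℕ) ≤ n := le_trans (hμ.1 0 a (Fin.zero_le a)) hμ.2
      simp [Fin.ext_iff, ha]
    · intro ν hν; funext a; have := (ν a).isLt
      simp [Fin.ext_iff]; omega
    · intro μ hμ
      simp only [BoxF, Finset.mem_filter, Finset.mem_univ, true_and] at hμ
      congr 1
      apply Finset.sum_congr rfl
      intro a _
      have ha : (μ a : ℕ) ≤ n := le_trans (hμ.1 0 a (Fin.zero_le a)) hμ.2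
      show (μ a : ℕ) = min (μ a : ℕ) n
      omega
  · -- part with μ 0 = n+1
    rw [B, Finset.mul_sum]
    apply Finset.sum_nbij' (i := fun μ => fun a : Fin k => μ a.succ)
      (j := fun ν => Fin.cons (Fin.last (n+1)) ν)
    · intro μ hμ
      simp only [BoxF, Finset.mem_filter, Finset.mem_univ, true_and,
        not_le] at *
      intro a b hab
      exact hμ.1 a.succ b.succ (by simpa using hab)
    · intro ν hν
      simp only [BoxF, Finset.mem_filter, Finset.mem_univ, true_and,
        not_le] at *
      constructor
      · intro a b hab
        by_cases h0 : a = 0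
        · subst h0
          rw [Fin.cons_zero]
          exact Nat.lt_succ_iff.mp (Fin.cons (α := fun _ => Fin (n+2)) (Fin.last (n+1)) ν b).isLt
        · have hb0 : b ≠ 0 := by
            intro h; subst h; exact h0 (Fin.le_zero_iff.mp hab)
          obtain ⟨a', rfl⟩ : ∃ a', a = a'.succ := ⟨a.pred h0, (Fin.succ_pred a h0).symm⟩
          obtain ⟨b', rfl⟩ : ∃ b', b = b'.succ := ⟨b.pred hb0, (Fin.succ_pred b hb0).symm⟩
          rw [Fin.cons_succ, Fin.cons_succ]
          exact hν a' b' (by simpa using hab)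
      · rw [Fin.cons_zero]; simp [Fin.last]
    · intro μ hμ
      simp only [BoxF, Finset.mem_filter, Finset.mem_univ, true_and,
        not_le] at hμ
      funext a
      refine Fin.cases ?_ ?_ a
      · have h0 : (μ 0 : ℕ) = n + 1 := by have := (μ 0).isLt; omega
        rw [Fin.cons_zero]
        exact (Fin.ext_iff.mpr (by simp [Fin.last, h0])).symm
      · intro b; simp
    · intro ν hν; funext a; simp
    · intro μ hμ
      simp only [BoxF, Finset.mem_filter, Finset.mem_univ, true_and,
        not_le] at hμ
      have h0 : (μ 0 : ℕ) = n + 1 := by have := (μ 0).isLt; omega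
      rw [Fin.sum_univ_succ, h0, pow_add]

lemma q_pow_ne_one {n : ℕ} (hn : n ≠ 0) : q ^ n ≠ 1 := by
  intro h
  have h2 : (algebraMap (Polynomial ℚ) (RatFunc ℚ)) (Polynomial.X ^ n) =
      (algebraMap (Polynomial ℚ) (RatFunc ℚ)) 1 := by
    simpa [q, RatFunc.algebraMap_X] using h
  have h3 := IsFractionRing.injective (Polynomial ℚ) (RatFunc ℚ) h2
  have := congrArg Polynomial.natDegree h3
  simp [Polynomial.natDegree_X_pow] at this
  exact hn this

lemma qPoch_q_ne_zero (m : ℕ) : qPoch q m ≠ 0 := by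
  rw [qPoch]
  apply Finset.prod_ne_zero_iff.2
  intro s _
  have : q * q ^ s = q ^ (s+1) := by ring
  rw [this, sub_ne_zero]
  exact fun h => q_pow_ne_one (Nat.succ_ne_zero s) h.symm

lemma qPoch_q_succ (m : ℕ) : qPoch q (m+1) = qPoch q m * (1 - q ^ (m+1)) := by
  rw [qPoch, Finset.prod_range_succ, qPoch]
  ring

lemma key : ∀ n k : ℕ, qPoch q k * qPoch q n * B n k = qPoch q (n+k) := by
  intro n
  induction n with
  | zero => intro k; simp [B_zero_left, qPoch]
  | succ n ihn =>
    intro k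
    induction k with
    | zero => simp [B_zero_right, qPoch]
    | succ k ihk =>
      rw [B_rec]
      have e1 : qPoch q (k+1) * qPoch q (n+1) * (B n (k+1) + q^(n+1) * B (n+1) k)
          = (1 - q^(n+1)) * (qPoch q (k+1) * qPoch q n * B n (k+1))
            + q^(n+1) * (1 - q^(k+1)) * (qPoch q k * qPoch q (n+1) * B (n+1) k) := by
        rw [qPoch_q_succ n, qPoch_q_succ k]
        ring
      rw [e1, ihn (k+1), ihk]
      have e2 : n + 1 + (k + 1) = (n + (k+1)) + 1 := by omega
      have e3 : n + 1 + k = n + (k+1) := by omega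
      rw [e2, e3, qPoch_q_succ]
      have e4 : n + (k+1) + 1 = (n+1) + (k+1) := by omega
      rw [e4]
      ring

lemma qbinom_eq {j k : ℕ} (hkj : k ≤ j) : qbinom j k = B (j - k) k := by
  rw [qbinom]
  have : j = (j - k) + k := by omega
  rw [this, ← key (j-k) k]
  have h1 : qPoch q k ≠ 0 := qPoch_q_ne_zero k
  have h2 : qPoch q (j - k) ≠ 0 := qPoch_q_ne_zero _
  rw [show (j - k + k - k) = j - k by omega]
  field_simp

lemma qPoch_expand (m k : ℕ) :
    qPoch (q^m) k = ∑ T : Finset (Fin k),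
      (-1 : RatFunc ℚ)^T.card * q^(T.card * m + ∑ b ∈ T, (b:ℕ)) := by
  rw [qPoch]
  rw [← Fin.prod_univ_eq_prod_range (fun s => (1 - q^m * q^s))]
  have e1 : ∀ s : Fin k, (1 : RatFunc ℚ) - q^m * q^(s:ℕ)
      = (-1) * q^(m + (s:ℕ)) + 1 := by
    intro s; rw [pow_add]; ring
  rw [Finset.prod_congr rfl (fun s _ => e1 s), Finset.prod_add]
  rw [Finset.powerset_univ]
  apply Finset.sum_congr rfl
  intro T _
  rw [Finset.prod_const_one, mul_one, Finset.prod_mul_distrib,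
    Finset.prod_const, Finset.prod_pow_eq_pow_sum]
  congr 1
  rw [Finset.sum_add_distrib, Finset.sum_const, smul_eq_mul]

/-- count of elements of `T` strictly to the right of `a` -/
noncomputable def cnt {k : ℕ} (T : Finset (Fin k)) (a : Fin k) : ℕ :=
  (T.filter (fun b => a < b)).card

lemma cnt_le {k : ℕ} (T : Finset (Fin k)) (a : Fin k) : cnt T a ≤ k - 1 := by
  have h : T.filter (fun b => a < b) ⊆ Finset.univ.erase a := by
    intro b hb
    simp only [Finset.mem_filter] at hb
    exact Finset.mem_erase.2 ⟨ne_of_gt hb.2, Finset.mem_univ b⟩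
  calc cnt T a ≤ (Finset.univ.erase a).card := Finset.card_le_card h
    _ = k - 1 := by rw [Finset.card_erase_of_mem (Finset.mem_univ a), Finset.card_univ,
        Fintype.card_fin]

lemma cnt_mono {k : ℕ} (T : Finset (Fin k)) {a b : Fin k} (hab : a ≤ b) :
    cnt T b ≤ cnt T a := by
  apply Finset.card_le_card
  intro c hc
  simp only [Finset.mem_filter] at *
  exact ⟨hc.1, lt_of_le_of_lt hab hc.2⟩

lemma cnt_lt {k : ℕ} (T : Finset (Fin k)) {a b : Fin k} (hb : b ∈ T) (hab : a < b) :
    cnt T b + 1 ≤ cnt T a := by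
  have h1 : T.filter (fun c => b < c) ⊆ (T.filter (fun c => a < c)).erase b := by
    intro c hc
    simp only [Finset.mem_filter] at hc
    refine Finset.mem_erase.2 ⟨(ne_of_gt hc.2), Finset.mem_filter.2 ⟨hc.1, lt_trans hab hc.2⟩⟩
  have hbmem : b ∈ T.filter (fun c => a < c) := Finset.mem_filter.2 ⟨hb, hab⟩
  have h2 := Finset.card_le_card h1
  rw [Finset.card_erase_of_mem hbmem] at h2
  have h3 : 1 ≤ (T.filter (fun c => a < c)).card := Finset.card_pos.2 ⟨b, hbmem⟩
  unfold cnt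
  omega

lemma cnt_sum {k : ℕ} (T : Finset (Fin k)) :
    ∑ a : Fin k, cnt T a = ∑ b ∈ T, (b : ℕ) := by
  have h1 : ∀ a : Fin k, cnt T a = ∑ b ∈ T, if a < b then 1 else 0 := by
    intro a; rw [cnt, Finset.card_filter]
  rw [Finset.sum_congr rfl (fun a _ => h1 a), Finset.sum_comm]
  apply Finset.sum_congr rfl
  intro b _
  rw [← Finset.card_filter]
  have : Finset.univ.filter (fun a : Fin k => a < b) = Finset.Iio b := by
    ext c; simp
  rw [this, Fin.card_Iio]

section Lmain
variable {j k : ℕ} (p : (Fin k → Fin j) × (Fin k → Bool))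
variable (hdec : ∀ a b : Fin k, a ≤ b → (p.1 b : ℕ) ≤ (p.1 a : ℕ))
variable (hov : ∀ a : Fin k, p.2 a = true → ∀ b : Fin k, b < a → p.1 b ≠ p.1 a)

include hdec hov in
lemma L_main (a b : Fin k) (hab : a ≤ b) :
    (Finset.univ.filter (fun c => a < c ∧ c ≤ b ∧ p.2 c = true)).card + (p.1 b : ℕ)
      ≤ (p.1 a : ℕ) := by
  have hba : (p.1 b : ℕ) ≤ (p.1 a : ℕ) := hdec a b hab
  have key : (Finset.univ.filter (fun c => a < c ∧ c ≤ b ∧ p.2 c = true)).card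
      ≤ (p.1 a : ℕ) - (p.1 b : ℕ) := by
    rw [← Finset.card_range ((p.1 a : ℕ) - (p.1 b : ℕ))]
    apply Finset.card_le_card_of_injOn (fun c => (p.1 c : ℕ) - (p.1 b : ℕ))
    · intro c hc
      simp only [Finset.coe_filter, Set.mem_setOf_eq, Finset.mem_filter, Finset.mem_univ, true_and] at hc
      obtain ⟨hac, hcb, hc2⟩ := hc
      have h1 : (p.1 c : ℕ) ≤ (p.1 a : ℕ) := hdec a c (le_of_lt hac)
      have h2 : (p.1 b : ℕ) ≤ (p.1 c : ℕ) := hdec c b hcb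
      have h3 : p.1 a ≠ p.1 c := hov c hc2 a hac
      have h4 : (p.1 c : ℕ) ≠ (p.1 a : ℕ) := fun h => h3 (Fin.ext h.symm)
      simp only [Finset.coe_range, Set.mem_Iio, Finset.mem_range]
      omega
    · intro c hc c' hc' hcc
      simp only [Finset.coe_filter, Set.mem_setOf_eq, Finset.mem_univ, true_and] at hc hc'
      obtain ⟨hac, hcb, hc2⟩ := hc
      obtain ⟨hac', hcb', hc2'⟩ := hc'
      have hcc2 : (p.1 c : ℕ) - (p.1 b : ℕ) = (p.1 c' : ℕ) - (p.1 b : ℕ) := hcc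
      have h2 : (p.1 b : ℕ) ≤ (p.1 c : ℕ) := hdec c b hcb
      have h2' : (p.1 b : ℕ) ≤ (p.1 c' : ℕ) := hdec c' b hcb'
      have hval : (p.1 c : ℕ) = (p.1 c' : ℕ) := by omega
      by_contra hne
      rcases lt_trichotomy c c' with h | h | h
      · exact hov c' hc2' c h (Fin.ext hval)
      · exact hne h
      · exact hov c hc2 c' h (Fin.ext hval.symm)
  omega

include hdec hov in
lemma cp_le (a : Fin k) :
    cnt (Finset.univ.filter (fun x => p.2 x = true)) a ≤ (p.1 a : ℕ) := by
  have hk0 : 0 < k := a.pos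
  set b : Fin k := ⟨k-1, by omega⟩ with hb
  have hab : a ≤ b := by rw [Fin.le_def]; have := a.isLt; simp [hb]; omega
  have h := L_main p hdec hov a b hab
  have hset : Finset.univ.filter (fun c => a < c ∧ c ≤ b ∧ p.2 c = true)
      = (Finset.univ.filter (fun x => p.2 x = true)).filter (fun c => a < c) := by
    ext c
    have hcb : c ≤ b := by rw [Fin.le_def]; have := c.isLt; simp [hb]; omega
    simp only [Finset.mem_filter, Finset.mem_univ, true_and]
    tauto
  rw [cnt, ← hset]
  omega

include hdec hov in
lemma cp_ineq (a b : Fin k) (hab : a ≤ b) :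
    cnt (Finset.univ.filter (fun x => p.2 x = true)) a + (p.1 b : ℕ)
      ≤ cnt (Finset.univ.filter (fun x => p.2 x = true)) b + (p.1 a : ℕ) := by
  set T := Finset.univ.filter (fun x => p.2 x = true) with hT
  have hsplit : T.filter (fun c => a < c)
      = (Finset.univ.filter (fun c => a < c ∧ c ≤ b ∧ p.2 c = true))
        ∪ T.filter (fun c => b < c) := by
    ext c
    simp only [Finset.mem_union, Finset.mem_filter, Finset.mem_univ, true_and, hT]
    constructor
    · rintro ⟨h1, h2⟩
      rcases le_or_gt c b with h3 | h3
      · exact Or.inl ⟨h2, h3, h1⟩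
      · exact Or.inr ⟨h1, h3⟩
    · rintro (⟨h1, h2, h3⟩ | ⟨h1, h2⟩)
      · exact ⟨h3, h1⟩
      · exact ⟨h1, lt_of_le_of_lt hab h2⟩
  have hdisj : Disjoint (Finset.univ.filter (fun c => a < c ∧ c ≤ b ∧ p.2 c = true))
      (T.filter (fun c => b < c)) := by
    rw [Finset.disjoint_left]
    intro c h1 h2
    simp only [Finset.mem_filter, Finset.mem_univ, true_and] at h1 h2
    exact absurd h2.2 (not_lt_of_ge h1.2.1)
  have hcardeq : cnt T a
      = (Finset.univ.filter (fun c => a < c ∧ c ≤ b ∧ p.2 c = true)).card + cnt T b := by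
    rw [cnt, hsplit, Finset.card_union_of_disjoint hdisj, cnt]
  have hL := L_main p hdec hov a b hab
  omega

end Lmain

/-- Forward map of the main bijection. -/
noncomputable def Phi {j k : ℕ} (hk : 1 ≤ k) (hkj : k ≤ j) :
    (Finset (Fin k)) × (Fin k → Fin (j - k + 1)) → (Fin k → Fin j) × (Fin k → Bool) :=
  fun x => (fun a => ⟨(x.2 a : ℕ) + cnt x.1 a, by
      have h1 := Nat.lt_succ_iff.mp (x.2 a).isLt
      have h2 := cnt_le x.1 a
      omega⟩,
    fun a => if a ∈ x.1 then true else false)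

/-- Backward map of the main bijection. -/
noncomputable def Psi {j k : ℕ} :
    (Fin k → Fin j) × (Fin k → Bool) → (Finset (Fin k)) × (Fin k → Fin (j - k + 1)) :=
  fun p => (Finset.univ.filter (fun a => p.2 a = true),
    fun a => ⟨min ((p.1 a : ℕ) - cnt (Finset.univ.filter (fun x => p.2 x = true)) a) (j - k),
      by omega⟩)

/-- Theorem 2.2 (per `k`): for `1 ≤ k ≤ j ≤ i`,
`(q^{i-k+1};q)_k [j choose k]_q = ∑_{λ ∈ O(i,j,k)} (-1)^{ol(λ)} q^{|λ| + ol(λ)(i-k+1)}`. -/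
theorem AG_overpartition_interpretation (i j k : ℕ) (hk : 1 ≤ k) (hkj : k ≤ j) (hji : j ≤ i) :
    qPoch (q ^ (i - k + 1)) k * qbinom j k =
      ∑ p ∈ AGset j k, (-1 : RatFunc ℚ) ^ ol p * q ^ (psize p + ol p * (i - k + 1)) := by
  set m := i - k + 1 with hm
  rw [qbinom_eq hkj, qPoch_expand, B, Finset.sum_mul_sum, ← Finset.sum_product']
  apply Finset.sum_nbij' (i := Phi hk hkj) (j := Psi)
  · -- maps into AGset
    intro x hx
    rw [Finset.mem_product] at hx
    have hμ : ∀ a b : Fin k, a ≤ b → (x.2 b : ℕ) ≤ (x.2 a : ℕ) := by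
      have := hx.2
      simp only [BoxF, Finset.mem_filter, Finset.mem_univ, true_and] at this
      exact this
    simp only [AGset, Finset.mem_filter, Finset.mem_univ, true_and]
    refine ⟨?_, ?_, ?_⟩
    · intro a b hab
      show (x.2 b : ℕ) + cnt x.1 b ≤ (x.2 a : ℕ) + cnt x.1 a
      have h1 := hμ a b hab
      have h2 := cnt_mono x.1 hab
      omega
    · intro a ha b hba
      have haT : a ∈ x.1 := by
        by_contra h
        simp only [Phi, h, if_false] at ha
        exact Bool.noConfusion ha
      have h1 := cnt_lt x.1 haT hba
      have h2 := hμ b a (le_of_lt hba)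
      intro hcon
      have := congrArg Fin.val hcon
      simp only [Phi] at this
      omega
    · intro s hs a hval
      rw [Finset.mem_Icc] at hs
      have hfe : Finset.univ.filter (fun b : Fin k => a < b ∧ (Phi hk hkj x).2 b = true)
          = x.1.filter (fun b => a < b) := by
        ext c
        simp only [Finset.mem_filter, Finset.mem_univ, true_and]; simp only [Phi]
        constructor
        · rintro ⟨h1, h2⟩
          refine ⟨?_, h1⟩
          by_contra h
          simp only [h, if_false] at h2
          exact Bool.noConfusion h2
        · rintro ⟨h1, h2⟩
          exact ⟨h2, by simp [h1]⟩
      rw [hfe]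
      have hval' : (x.2 a : ℕ) + cnt x.1 a = j - s := hval
      have h1 := Nat.lt_succ_iff.mp (x.2 a).isLt
      show k - s ≤ cnt x.1 a
      omega
  · -- maps back into the product
    intro p hp
    simp only [AGset, Finset.mem_filter, Finset.mem_univ, true_and] at hp
    obtain ⟨hdec, hov, -⟩ := hp
    rw [Finset.mem_product]
    refine ⟨Finset.mem_univ _, ?_⟩
    simp only [BoxF, Finset.mem_filter, Finset.mem_univ, true_and]
    intro a b hab
    show min ((p.1 b : ℕ) - cnt (Finset.univ.filter (fun x => p.2 x = true)) b) (j - k)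
        ≤ min ((p.1 a : ℕ) - cnt (Finset.univ.filter (fun x => p.2 x = true)) a) (j - k)
    have h1 := cp_ineq p hdec hov a b hab
    have h2 := cp_le p hdec hov a
    have h3 := cp_le p hdec hov b
    omega
  · -- left inverse
    intro x hx
    rw [Finset.mem_product] at hx
    have hTfe : Finset.univ.filter (fun a : Fin k => (Phi hk hkj x).2 a = true) = x.1 := by
      ext c
      simp only [Finset.mem_filter, Finset.mem_univ, true_and]; simp only [Phi]
      constructor
      · intro h
        by_contra hc
        simp only [hc, if_false] at h
        exact Bool.noConfusion h
      · intro h; simp [h]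
    have h1 : (Psi (Phi hk hkj x)).1 = x.1 := hTfe
    have h2 : (Psi (Phi hk hkj x)).2 = x.2 := by
      funext a
      apply Fin.ext
      show min (((x.2 a : ℕ) + cnt x.1 a) - cnt (Finset.univ.filter
        (fun b : Fin k => (Phi hk hkj x).2 b = true)) a) (j - k) = (x.2 a : ℕ)
      rw [hTfe]
      have := Nat.lt_succ_iff.mp (x.2 a).isLt
      omega
    exact Prod.ext h1 h2
  · -- right inverse
    intro p hp
    simp only [AGset, Finset.mem_filter, Finset.mem_univ, true_and] at hp
    obtain ⟨hdec, hov, hcond3⟩ := hp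
    set T := Finset.univ.filter (fun x => p.2 x = true) with hT
    have hL2 : ∀ a : Fin k, (p.1 a : ℕ) - cnt T a ≤ j - k := by
      intro a
      by_cases hcase : (p.1 a : ℕ) ≤ j - k
      · omega
      · have hja := a.isLt
        have hpja := (p.1 a).isLt
        set s := j - (p.1 a : ℕ) with hs
        have hs1 : 1 ≤ s := by omega
        have hs2 : s ≤ k - 1 := by omega
        have hc := hcond3 s (Finset.mem_Icc.2 ⟨hs1, hs2⟩) a (by omega)
        have hfe : Finset.univ.filter (fun b : Fin k => a < b ∧ p.2 b = true)
            = T.filter (fun b => a < b) := by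
          ext c
          simp only [Finset.mem_filter, Finset.mem_univ, true_and, hT]
          tauto
        rw [hfe] at hc
        have hc2 : k - s ≤ cnt T a := hc
        omega
    have h2 : (Phi hk hkj (Psi p)).2 = p.2 := by
      funext a
      by_cases hpa : p.2 a = true
      · have hmem : a ∈ (Psi p).1 := by
          simp only [Psi, Finset.mem_filter, Finset.mem_univ, true_and]
          exact hpa
        simp only [Phi, hmem, if_true, hpa]
      · have hmem : a ∉ (Psi p).1 := by
          simp only [Psi, Finset.mem_filter, Finset.mem_univ, true_and]
          exact hpa
        simp only [Phi, hmem, if_false]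
        exact ((Bool.not_eq_true _).mp hpa).symm
    have h1 : (Phi hk hkj (Psi p)).1 = p.1 := by
      funext a
      apply Fin.ext
      have hcp := cp_le p hdec hov a
      rw [← hT] at hcp
      have hL2a := hL2 a
      show min ((p.1 a : ℕ) - cnt T a) (j - k) + cnt ((Psi p).1) a = (p.1 a : ℕ)
      have hPsi1 : (Psi p).1 = T := rfl
      rw [hPsi1]
      omega
    exact Prod.ext h1 h2
  · -- weights agree
    intro x hx
    rw [Finset.mem_product] at hx
    have hTfe : Finset.univ.filter (fun a : Fin k => (Phi hk hkj x).2 a = true) = x.1 := by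
      ext c
      simp only [Finset.mem_filter, Finset.mem_univ, true_and]; simp only [Phi]
      constructor
      · intro h
        by_contra hc
        simp only [hc, if_false] at h
        exact Bool.noConfusion h
      · intro h; simp [h]
    have hol : ol (Phi hk hkj x) = x.1.card := by rw [ol, hTfe]
    have hps : psize (Phi hk hkj x) = (∑ a, (x.2 a : ℕ)) + ∑ b ∈ x.1, (b : ℕ) := by
      rw [psize]
      have he : ∀ a : Fin k, ((Phi hk hkj x).1 a : ℕ) = (x.2 a : ℕ) + cnt x.1 a :=
        fun a => rfl
      rw [Finset.sum_congr rfl (fun a _ => he a), Finset.sum_add_distrib, cnt_sum]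
    rw [hol, hps, mul_assoc, ← pow_add]
    congr 1
    ring
end
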